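/- There exists a constant C > 0 such that for all integers n ≥ 1: |Σ_{x=1}^{n} {n/x} − (1 − γ)·n| ≤ C·√n, where γ is the Euler–Mascheroni constant. Equivalently, (1/n)·Σ_{x=1}^{n} {n/x} = 1 − γ + O(n^{−1/2}) as n → ∞ (Dirichlet's theorem). -/

import Mathlib

open Finset

lemma hyperbola (n : ℕ) (hn : 1 ≤ n) :
    (∑ x ∈ Icc 1 n, n / x) + n.sqrt * n.sqrt = 2 * ∑ x ∈ Icc 1 n.sqrt, n / x := by
  set K := n.sqrt with hK
  have hK1 : 1 ≤ K := by rw [hK, Nat.le_sqrt]; simpa using hn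
  have hKn : K ≤ n := Nat.sqrt_le_self n
  have hKsq : K * K ≤ n := Nat.sqrt_le n
  have hlt : n < (K+1) * (K+1) := Nat.lt_succ_sqrt n
  have hsplit : (∑ x ∈ Icc 1 n, n / x)
      = (∑ x ∈ Icc 1 K, n / x) + ∑ x ∈ Icc (K+1) n, n / x := by
    rw [← Finset.sum_union]
    · congr 1
      ext x; simp only [Finset.mem_union, Finset.mem_Icc]; omega
    · rw [Finset.disjoint_left]; intro a ha hb
      simp only [Finset.mem_Icc] at ha hb; omega
  have h1 : ∀ x ∈ Icc (K+1) n, n / x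
      = ∑ y ∈ Icc 1 K, if x * y ≤ n then 1 else 0 := by
    intro x hx
    simp only [Finset.mem_Icc] at hx
    have hx0 : 0 < x := by omega
    have hxK : n / x ≤ K := by
      have : n / x < K + 1 := by
        rw [Nat.div_lt_iff_lt_mul hx0]
        calc n < (K+1)*(K+1) := hlt
          _ ≤ (K+1)*x := Nat.mul_le_mul_left _ hx.1
      omega
    rw [← Finset.card_filter]
    have heq : Finset.filter (fun y => x * y ≤ n) (Icc 1 K) = Icc 1 (n / x) := by
      ext y
      simp only [Finset.mem_filter, Finset.mem_Icc]
      constructor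
      · rintro ⟨⟨h1y, h2y⟩, h3⟩
        exact ⟨h1y, Nat.le_div_iff_mul_le hx0 |>.2 (by rwa [Nat.mul_comm] at h3)⟩
      · rintro ⟨h1y, h2y⟩
        refine ⟨⟨h1y, h2y.trans hxK⟩, ?_⟩
        rw [Nat.mul_comm]
        exact (Nat.le_div_iff_mul_le hx0).1 h2y
    rw [heq, Nat.card_Icc]
    simp
  have h2 : ∀ y ∈ Icc 1 K, (∑ x ∈ Icc (K+1) n, if x * y ≤ n then 1 else 0)
      = n / y - K := by
    intro y hy
    simp only [Finset.mem_Icc] at hy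
    have hy0 : 0 < y := hy.1
    rw [← Finset.card_filter]
    have heq : Finset.filter (fun x => x * y ≤ n) (Icc (K+1) n) = Icc (K+1) (n / y) := by
      ext x
      simp only [Finset.mem_filter, Finset.mem_Icc]
      have hdn : n / y ≤ n := Nat.div_le_self n y
      constructor
      · rintro ⟨⟨ha, hb⟩, hc⟩
        exact ⟨ha, (Nat.le_div_iff_mul_le hy0).2 hc⟩
      · rintro ⟨ha, hb⟩
        exact ⟨⟨ha, hb.trans hdn⟩, (Nat.le_div_iff_mul_le hy0).1 hb⟩
    rw [heq, Nat.card_Icc]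
    exact Nat.succ_sub_succ _ _
  have hdc : (∑ x ∈ Icc (K+1) n, n / x) = ∑ y ∈ Icc 1 K, (n / y - K) := by
    rw [Finset.sum_congr rfl h1, Finset.sum_comm, Finset.sum_congr rfl h2]
  have h3 : ∀ y ∈ Icc 1 K, K ≤ n / y := by
    intro y hy
    simp only [Finset.mem_Icc] at hy
    rw [Nat.le_div_iff_mul_le hy.1]
    calc K * y ≤ K * K := Nat.mul_le_mul_left _ hy.2
      _ ≤ n := hKsq
  have hconst : ∑ _y ∈ Icc 1 K, K = K * K := by
    rw [Finset.sum_const, Nat.card_Icc, smul_eq_mul]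
    congr 1
  have hle : (∑ _y ∈ Icc 1 K, K) ≤ ∑ y ∈ Icc 1 K, n / y := Finset.sum_le_sum h3
  have hfin : (∑ y ∈ Icc 1 K, (n / y - K)) = (∑ y ∈ Icc 1 K, n / y) - K * K := by
    rw [Finset.sum_tsub_distrib _ h3, hconst]
  rw [hsplit, hdc, hfin]
  rw [hconst] at hle
  omega

open Finset

lemma floor_cast_div (n x : ℕ) (hx : 0 < x) :
    ⌊(n : ℝ) / (x : ℝ)⌋ = ((n / x : ℕ) : ℤ) := by
  rw [Int.floor_eq_iff]
  constructor
  · exact_mod_cast Nat.cast_div_le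
  · push_cast
    rw [div_lt_iff₀ (by exact_mod_cast hx)]
    exact_mod_cast (Nat.div_lt_iff_lt_mul hx).1 (Nat.lt_succ_self (n / x))

lemma harmonic_cast (m : ℕ) : ((harmonic m : ℝ)) = ∑ x ∈ Icc 1 m, (1:ℝ)/x := by
  rw [harmonic_eq_sum_Icc]
  push_cast
  simp [one_div]

open Finset Real

-- quantitative harmonic bound
lemma harm_bound (m : ℕ) (hm : 1 ≤ m) :
    |((harmonic m : ℝ)) - Real.log m - Real.eulerMascheroniConstant| ≤ 1 / m := by
  have h1 := Real.eulerMascheroniSeq_lt_eulerMascheroniConstant m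
  have h2 := Real.eulerMascheroniConstant_lt_eulerMascheroniSeq' m
  rw [Real.eulerMascheroniSeq] at h1
  rw [Real.eulerMascheroniSeq', if_neg (by omega)] at h2
  have hmpos : (0:ℝ) < m := by exact_mod_cast hm
  have hlog : Real.log (m + 1) - Real.log m ≤ 1 / m := by
    rw [← Real.log_div (by positivity) (by positivity)]
    have := Real.log_le_sub_one_of_pos (x := ((m:ℝ)+1)/m) (by positivity)
    have : ((m:ℝ)+1)/m - 1 = 1/m := by field_simp; ring
    calc Real.log (((m:ℝ)+1)/m) ≤ ((m:ℝ)+1)/m - 1 :=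
          Real.log_le_sub_one_of_pos (by positivity)
      _ = 1/m := by field_simp; ring
  rw [abs_le]
  constructor <;> nlinarith [Real.log_le_sub_one_of_pos hmpos]

set_option maxHeartbeats 1000000 in
theorem dirichlet_sum_fract (γ : ℝ) (hγ : γ = Real.eulerMascheroniConstant) :
    ∃ C : ℝ, 0 < C ∧ ∀ n : ℕ, 1 ≤ n →
      |(∑ x ∈ Finset.Icc 1 n, Int.fract ((n : ℝ) / x)) - (1 - γ) * (n : ℝ)| ≤
        C * Real.sqrt n := by
  refine ⟨30, by norm_num, fun n hn => ?_⟩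
  set K := n.sqrt with hKdef
  have hK1 : 1 ≤ K := by rw [hKdef, Nat.le_sqrt]; simpa using hn
  have hKn : K ≤ n := Nat.sqrt_le_self n
  have hKsq : K * K ≤ n := Nat.sqrt_le n
  have hlt : n < (K+1) * (K+1) := Nat.lt_succ_sqrt n
  set N : ℝ := (n : ℝ) with hNdef
  set Kr : ℝ := (K : ℝ) with hKrdef
  have hKr1 : (1:ℝ) ≤ Kr := by rw [hKrdef]; exact_mod_cast hK1
  have hKr0 : (0:ℝ) < Kr := by linarith
  have hN1 : (1:ℝ) ≤ N := by rw [hNdef]; exact_mod_cast hn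
  have hN0 : (0:ℝ) < N := by linarith
  have hKsqR : Kr * Kr ≤ N := by rw [hKrdef, hNdef]; exact_mod_cast hKsq
  have hltR : N < (Kr+1) * (Kr+1) := by rw [hKrdef, hNdef]; exact_mod_cast hlt
  have hN4 : N ≤ 4 * (Kr * Kr) := by nlinarith
  set sq : ℝ := Real.sqrt N with hsqdef
  have hKsqrt : Kr ≤ sq := by
    rw [hsqdef, show Kr = Real.sqrt (Kr * Kr) from (Real.sqrt_mul_self hKr0.le).symm]
    exact Real.sqrt_le_sqrt hKsqR
  have hsq1 : (1:ℝ) ≤ sq := by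
    rw [hsqdef, show (1:ℝ) = Real.sqrt 1 from (Real.sqrt_one).symm]
    exact Real.sqrt_le_sqrt hN1
  -- fract identity
  have hfr : ∀ m : ℕ, 1 ≤ m → m ≤ n →
      (∑ x ∈ Finset.Icc 1 m, Int.fract ((n : ℝ) / x))
        = N * (harmonic m : ℝ) - ((∑ x ∈ Finset.Icc 1 m, n / x : ℕ) : ℝ) := by
    intro m hm1 hmn
    have hterm : ∀ x ∈ Finset.Icc 1 m, Int.fract ((n : ℝ) / x)
        = N * (1/(x:ℝ)) - ((n / x : ℕ) : ℝ) := by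
      intro x hx
      simp only [Finset.mem_Icc] at hx
      rw [Int.fract, floor_cast_div n x hx.1, Int.cast_natCast, hNdef]
      ring
    rw [Finset.sum_congr rfl hterm, Finset.sum_sub_distrib, ← Finset.mul_sum,
      harmonic_cast, Nat.cast_sum]
  set Hn : ℝ := (harmonic n : ℝ) with hHn
  set HK : ℝ := (harmonic K : ℝ) with hHK
  set F : ℝ := ∑ x ∈ Finset.Icc 1 K, Int.fract ((n : ℝ) / x) with hFdef
  set S : ℝ := ∑ x ∈ Finset.Icc 1 n, Int.fract ((n : ℝ) / x) with hSdef
  have hSeq : S = N * Hn - ((∑ x ∈ Finset.Icc 1 n, n / x : ℕ) : ℝ) := hfr n hn le_rfl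
  have hFeq : F = N * HK - ((∑ x ∈ Finset.Icc 1 K, n / x : ℕ) : ℝ) := hfr K hK1 hKn
  have hHyp : ((∑ x ∈ Finset.Icc 1 n, n / x : ℕ) : ℝ) + Kr * Kr
      = 2 * ((∑ x ∈ Finset.Icc 1 K, n / x : ℕ) : ℝ) := by
    rw [hKrdef]
    exact_mod_cast congrArg (Nat.cast : ℕ → ℝ) (hyperbola n hn)
  have hS : S = N * Hn - 2 * (N * HK) + 2 * F + Kr * Kr := by linarith
  -- bounds on F
  have hF0 : 0 ≤ F := Finset.sum_nonneg fun x _ => Int.fract_nonneg _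
  have hFK : F ≤ Kr := by
    have h1 : F ≤ ∑ _x ∈ Finset.Icc 1 K, (1:ℝ) :=
      Finset.sum_le_sum fun x _ => (Int.fract_lt_one _).le
    simp only [Finset.sum_const, Nat.card_Icc, nsmul_eq_mul, mul_one,
      Nat.add_sub_cancel] at h1
    rw [hKrdef]
    exact_mod_cast h1
  -- harmonic bounds
  have ha : |Hn - Real.log N - γ| ≤ 1 / N := by
    rw [hγ, hHn, hNdef]; exact harm_bound n hn
  have hb : |HK - Real.log Kr - γ| ≤ 1 / Kr := by
    rw [hγ, hHK, hKrdef]; exact harm_bound K hK1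
  -- log bound
  set L : ℝ := Real.log N - 2 * Real.log Kr with hLdef
  have h2log : 2 * Real.log Kr = Real.log (Kr * Kr) := by
    rw [Real.log_mul hKr0.ne' hKr0.ne']; ring
  have hKK0 : (0:ℝ) < Kr * Kr := by positivity
  have hL0 : 0 ≤ L := by
    rw [hLdef, h2log, sub_nonneg]
    exact Real.log_le_log hKK0 hKsqR
  have hL1 : Kr * Kr * L ≤ N - Kr * Kr := by
    have hdiv : (0:ℝ) < N / (Kr * Kr) := by positivity
    have h := Real.log_le_sub_one_of_pos hdiv
    rw [Real.log_div hN0.ne' hKK0.ne', ← h2log] at h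
    have key : Kr * Kr * (N / (Kr * Kr)) = N := by field_simp
    have := mul_le_mul_of_nonneg_left h hKK0.le
    rw [hLdef]
    nlinarith [this, key]
  -- decomposition
  have hdecomp : S - (1 - γ) * N
      = N * (Hn - Real.log N - γ) - 2 * N * (HK - Real.log Kr - γ)
        + (N * L - (N - Kr * Kr)) + 2 * F := by
    rw [hS, hLdef]; ring
  have hA : |N * (Hn - Real.log N - γ)| ≤ 1 := by
    rw [abs_mul, abs_of_pos hN0]
    calc N * |Hn - Real.log N - γ| ≤ N * (1/N) :=
          mul_le_mul_of_nonneg_left ha hN0.le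
      _ = 1 := by field_simp
  have hB : |2 * N * (HK - Real.log Kr - γ)| ≤ 8 * Kr := by
    rw [abs_mul, abs_of_pos (by linarith : (0:ℝ) < 2 * N)]
    calc 2 * N * |HK - Real.log Kr - γ| ≤ 2 * N * (1/Kr) :=
          mul_le_mul_of_nonneg_left hb (by linarith)
      _ ≤ 8 * Kr := by
          rw [div_eq_mul_inv, one_mul, ← sub_nonneg]
          have heq : 8 * Kr - 2 * N * Kr⁻¹ = (8 * (Kr*Kr) - 2 * N) * Kr⁻¹ := by
            field_simp
          rw [heq]
          exact mul_nonneg (by linarith) (inv_nonneg.2 hKr0.le)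
  have hr2 : N - Kr * Kr ≤ 2 * Kr := by
    have hint : n ≤ K*K + 2*K := by nlinarith [hlt]
    have hc : N ≤ Kr*Kr + 2*Kr := by rw [hNdef, hKrdef]; exact_mod_cast hint
    linarith
  have hr0 : 0 ≤ N - Kr * Kr := by linarith
  have hE : |N * L - (N - Kr * Kr)| ≤ 8 * Kr := by
    rw [abs_le]
    constructor
    · have : 0 ≤ N * L := mul_nonneg hN0.le hL0
      linarith
    · have h1 : N * L ≤ 4 * (Kr * Kr) * L := mul_le_mul_of_nonneg_right hN4 hL0
      have h2 : 4 * (Kr * Kr) * L ≤ 4 * (N - Kr * Kr) := by nlinarith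
      linarith
  have habs : |S - (1 - γ) * N| ≤ 1 + 8 * Kr + 8 * Kr + 2 * F := by
    rw [hdecomp]
    have t1 := abs_add_le (N * (Hn - Real.log N - γ) - 2 * N * (HK - Real.log Kr - γ)
      + (N * L - (N - Kr * Kr))) (2 * F)
    have t2 := abs_add_le (N * (Hn - Real.log N - γ) - 2 * N * (HK - Real.log Kr - γ))
      (N * L - (N - Kr * Kr))
    have t3 := abs_sub (N * (Hn - Real.log N - γ)) (2 * N * (HK - Real.log Kr - γ))
    have t4 : |2 * F| = 2 * F := abs_of_nonneg (by linarith)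
    linarith
  have hfinal : (1:ℝ) + 8 * Kr + 8 * Kr + 2 * F ≤ 30 * sq := by linarith
  calc |S - (1 - γ) * N| ≤ 1 + 8 * Kr + 8 * Kr + 2 * F := habs
    _ ≤ 30 * sq := hfinal
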